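/- For an even number of vertices n, any generic framework (B_{n−2}, p) of the (n−2)-gonal bipyramid in ℝ² has at least two congruence classes: there exists a framework (B_{n−2}, q) equivalent to (B_{n−2}, p) but not congruent to it. This follows because the defining polynomial f(p)(t) of the pinned configuration space has even degree n − 4 and satisfies f(p)(0) = 0, hence has another real root. -/

import Mathlib

/-- The signed area (times 2) of the triangle on `x 0, x 1, x 2 ∈ ℝ²`. -/
noncomputable def vol (d : ℕ) (x : Fin (d + 1) → Fin d → ℝ) : ℝ :=
  (Matrix.of fun i j => (Fin.cases 1 (fun k => x j k) i : ℝ) :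
    Matrix (Fin (d + 1)) (Fin (d + 1)) ℝ).det

/-- A configuration `p` of `n` points in `ℝ²` is generic if no nonzero
polynomial with rational coefficients vanishes at its coordinates. -/
def Generic (n : ℕ) (p : Fin n → Fin 2 → ℝ) : Prop :=
  ∀ f : MvPolynomial (Fin n × Fin 2) ℚ, f ≠ 0 →
    MvPolynomial.aeval (fun v => p v.1 v.2) f ≠ 0

open Fin.NatCast in
/-- The hyperedges of the `(n−2)`-gonal bipyramid `B_{n−2}` on `n = m + 5`
vertices: apexes `0` and `n−1 = m+4`, equatorial cycle `1, …, n−2 = m+3`, with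
triangles `{0, i, i+1}` and `{i, i+1, n−1}` around the equator (indices cyclic,
so also `{0, m+3, 1}` and `{m+3, 1, m+4}`). -/
def bipyramidEdges (m : ℕ) : Set (Fin 3 → Fin (m + 5)) :=
  {h | ∃ i : ℕ, 1 ≤ i ∧ i ≤ m + 2 ∧
      (h = ![(0 : Fin (m + 5)), (i : Fin (m + 5)), ((i + 1 : ℕ) : Fin (m + 5))] ∨
       h = ![(i : Fin (m + 5)), ((i + 1 : ℕ) : Fin (m + 5)),
              ((m + 4 : ℕ) : Fin (m + 5))])} ∪
  {h | h = ![(0 : Fin (m + 5)), ((m + 3 : ℕ) : Fin (m + 5)), (1 : Fin (m + 5))] ∨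
       h = ![((m + 3 : ℕ) : Fin (m + 5)), (1 : Fin (m + 5)),
              ((m + 4 : ℕ) : Fin (m + 5))]}

open Finset
open Fin.NatCast

namespace BipyrAux

/-- cyclic successor on `{0, ..., m+2}` -/
def sk (m : ℕ) (i : ℕ) : ℕ := if i + 1 = m + 3 then 0 else i + 1

/-- the cyclic index set minus `i` and its successor -/
def E (m : ℕ) (i : ℕ) : Finset ℕ := ((Finset.range (m+3)).erase i).erase (sk m i)

lemma sk_lt (m i : ℕ) (_ : i < m+3) : sk m i < m+3 := by
  unfold sk; split <;> omega

lemma sk_ne (m i : ℕ) : sk m i ≠ i := by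
  unfold sk; split <;> omega

lemma sk_mem_erase (m i : ℕ) (hi : i ∈ Finset.range (m+3)) :
    sk m i ∈ (Finset.range (m+3)).erase i := by
  rw [Finset.mem_erase, Finset.mem_range] at *
  exact ⟨sk_ne m i, sk_lt m i hi⟩

lemma card_E (m i : ℕ) (hi : i ∈ Finset.range (m+3)) : (E m i).card = m + 1 := by
  unfold E
  rw [Finset.card_erase_of_mem (sk_mem_erase m i hi), Finset.card_erase_of_mem hi,
    Finset.card_range]
  omega

lemma derivative_finset_prod {ι : Type*} [DecidableEq ι] (s : Finset ι)
    (f : ι → Polynomial ℝ) :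
    Polynomial.derivative (∏ i ∈ s, f i)
      = ∑ b ∈ s, (∏ a ∈ s.erase b, f a) * Polynomial.derivative (f b) := by
  induction s using Finset.induction_on with
  | empty => simp
  | @insert a s ha ih =>
    rw [Finset.prod_insert ha, Polynomial.derivative_mul, ih, Finset.sum_insert ha,
      Finset.erase_insert ha, Finset.mul_sum]
    congr 1
    · exact mul_comm _ _
    apply Finset.sum_congr rfl
    intro b hb
    have hab : a ≠ b := fun h => ha (h ▸ hb)
    have h2 : (insert a s).erase b = insert a (s.erase b) :=
      Finset.erase_insert_of_ne hab
    rw [h2, Finset.prod_insert (fun h => ha (Finset.mem_of_mem_erase h))]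
    ring

lemma prod_E_mul (m i : ℕ) (hi : i ∈ Finset.range (m+3)) (x : ℕ → ℝ) :
    x i * (x (sk m i) * ∏ j ∈ E m i, x j) = ∏ j ∈ Finset.range (m+3), x j := by
  unfold E
  rw [Finset.mul_prod_erase _ _ (sk_mem_erase m i hi), Finset.mul_prod_erase _ _ hi]

lemma sk_prod_erase (m i : ℕ) (hi : i ∈ Finset.range (m+3)) (x : ℕ → ℝ) :
    x (sk m i) * ∏ j ∈ E m i, x j = ∏ j ∈ (Finset.range (m+3)).erase i, x j := by
  unfold E
  rw [Finset.mul_prod_erase _ _ (sk_mem_erase m i hi)]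

lemma i_prod_erase (m i : ℕ) (hi : i ∈ Finset.range (m+3)) (x : ℕ → ℝ) :
    x i * ∏ j ∈ E m i, x j = ∏ j ∈ (Finset.range (m+3)).erase (sk m i), x j := by
  unfold E
  rw [Finset.erase_right_comm]
  have hmem : i ∈ ((Finset.range (m+3)).erase (sk m i)) := by
    rw [Finset.mem_erase]
    exact ⟨fun hh => (sk_ne m i) hh.symm, hi⟩
  rw [Finset.mul_prod_erase _ _ hmem]

/-- reindexing a cyclic sum by the successor map -/
lemma sum_sk (m : ℕ) (F : ℕ → ℝ) :
    ∑ i ∈ Finset.range (m+3), F (sk m i) = ∑ i ∈ Finset.range (m+3), F i := by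
  apply Finset.sum_nbij' (fun i => sk m i) (fun i => if i = 0 then m+2 else i - 1)
  · intro a ha; rw [Finset.mem_range] at *; exact sk_lt m a ha
  · intro a ha; rw [Finset.mem_range] at *; split <;> omega
  · intro a ha; rw [Finset.mem_range] at ha; unfold sk; split <;> split <;> omega
  · intro a ha; rw [Finset.mem_range] at ha; unfold sk; split <;> split <;> omega
  · intro a _; rfl

section Defs
variable {R : Type*} [CommRing R] (m : ℕ) (π : Fin (m+5) → Fin 2 → R)

def vv (j : Fin 2) : R := π ((m+4 : ℕ) : Fin (m+5)) j - π 0 j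
def Nq : R := vv m π 0 ^ 2 + vv m π 1 ^ 2
def Xq (i : ℕ) : R :=
  vv m π 0 * (π ((i+1 : ℕ) : Fin (m+5)) 1 - π 0 1)
    - vv m π 1 * (π ((i+1 : ℕ) : Fin (m+5)) 0 - π 0 0)
def Yq (i : ℕ) : R :=
  vv m π 0 * (π ((i+1 : ℕ) : Fin (m+5)) 0 - π 0 0)
    + vv m π 1 * (π ((i+1 : ℕ) : Fin (m+5)) 1 - π 0 1)
def Cq (i : ℕ) : R := Yq m π i * Xq m π (sk m i) - Yq m π (sk m i) * Xq m π i
def Lq : R := ∑ i ∈ Finset.range (m+3), Cq m π i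
def Q2q : R := ∑ i ∈ Finset.range (m+3),
  Cq m π i * ∑ j ∈ E m i, (∏ l ∈ (E m i).erase j, Xq m π l) * Nq m π
def Rq (i : ℕ) : R := ∑ l ∈ Finset.range (m+3),
  Cq m π l * ∏ j ∈ E m l, (Xq m π j - Xq m π i)

end Defs

section MapLemmas
variable {R S : Type*} [CommRing R] [CommRing S] (f : R →+* S) (m : ℕ)
  (π : Fin (m+5) → Fin 2 → R)

lemma map_vv (j : Fin 2) : f (vv m π j) = vv m (fun v i => f (π v i)) j := by
  simp [vv]

lemma map_Nq : f (Nq m π) = Nq m (fun v i => f (π v i)) := by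
  simp [Nq, map_vv]

lemma map_Xq (i : ℕ) : f (Xq m π i) = Xq m (fun v i => f (π v i)) i := by
  simp [Xq, map_vv]

lemma map_Yq (i : ℕ) : f (Yq m π i) = Yq m (fun v i => f (π v i)) i := by
  simp [Yq, map_vv]

lemma map_Cq (i : ℕ) : f (Cq m π i) = Cq m (fun v i => f (π v i)) i := by
  simp [Cq, map_Xq, map_Yq]

lemma map_Lq : f (Lq m π) = Lq m (fun v i => f (π v i)) := by
  simp [Lq, map_sum, map_Cq]

lemma map_Q2q : f (Q2q m π) = Q2q m (fun v i => f (π v i)) := by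
  simp [Q2q, map_sum, map_mul, map_prod, map_Cq, map_Xq, map_Nq]

lemma map_Rq (i : ℕ) : f (Rq m π i) = Rq m (fun v i => f (π v i)) i := by
  simp [Rq, map_sum, map_mul, map_prod, map_sub, map_Cq, map_Xq]

end MapLemmas

section PolyPart
open Polynomial

variable (m : ℕ) (p : Fin (m+5) → Fin 2 → ℝ)

/-- the defining polynomial of the pinned configuration space -/
noncomputable def Ppoly : Polynomial ℝ :=
  ∑ i ∈ Finset.range (m+3), Polynomial.C (Cq m p i) *
    ∏ j ∈ E m i, (Polynomial.C (Xq m p j) + Polynomial.C (Nq m p) * Polynomial.X)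

lemma Ppoly_eval (s : ℝ) :
    (Ppoly m p).eval s = ∑ i ∈ Finset.range (m+3),
      Cq m p i * ∏ j ∈ E m i, (Xq m p j + Nq m p * s) := by
  simp [Ppoly, Polynomial.eval_finset_sum, Polynomial.eval_prod]

/-- the factorization identity: `P(s) = s * N * G̃(s)` -/
lemma Ppoly_eval_eq (s : ℝ) :
    (Ppoly m p).eval s = s * Nq m p * ∑ i ∈ Finset.range (m+3),
      (Yq m p (sk m i) - Yq m p i) * ∏ j ∈ E m i, (Xq m p j + Nq m p * s) := by
  rw [Ppoly_eval]
  set x : ℕ → ℝ := fun j => Xq m p j + Nq m p * s with hx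
  have key : ∀ i ∈ Finset.range (m+3),
      Cq m p i * ∏ j ∈ E m i, x j
        = (Yq m p i * (x (sk m i) * ∏ j ∈ E m i, x j)
            - Yq m p (sk m i) * (x i * ∏ j ∈ E m i, x j))
          + s * Nq m p * ((Yq m p (sk m i) - Yq m p i) * ∏ j ∈ E m i, x j) := by
    intro i _
    have hC : Cq m p i = Yq m p i * x (sk m i) - Yq m p (sk m i) * x i
        + s * Nq m p * (Yq m p (sk m i) - Yq m p i) := by
      simp only [Cq, hx]; ring
    rw [hC]; ring
  rw [Finset.sum_congr rfl key, Finset.sum_add_distrib, ← Finset.mul_sum]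
  have tele : ∑ i ∈ Finset.range (m+3),
      (Yq m p i * (x (sk m i) * ∏ j ∈ E m i, x j)
        - Yq m p (sk m i) * (x i * ∏ j ∈ E m i, x j)) = 0 := by
    have congr1 : ∀ i ∈ Finset.range (m+3),
        Yq m p i * (x (sk m i) * ∏ j ∈ E m i, x j)
          - Yq m p (sk m i) * (x i * ∏ j ∈ E m i, x j)
        = Yq m p i * ∏ j ∈ (Finset.range (m+3)).erase i, x j
          - Yq m p (sk m i) * ∏ j ∈ (Finset.range (m+3)).erase (sk m i), x j := by
      intro i hi
      rw [sk_prod_erase m i hi x, i_prod_erase m i hi x]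
    rw [Finset.sum_congr rfl congr1, Finset.sum_sub_distrib]
    rw [sum_sk m (fun i => Yq m p i * ∏ j ∈ (Finset.range (m+3)).erase i, x j)]
    ring
  rw [tele]; ring

lemma Ppoly_natDegree_le : (Ppoly m p).natDegree ≤ m + 1 := by
  apply (Polynomial.natDegree_sum_le _ _).trans
  rw [Finset.fold_max_le]
  refine ⟨by omega, ?_⟩
  intro i hi
  simp only [Function.comp]
  refine le_trans (Polynomial.natDegree_C_mul_le _ _) ?_
  refine le_trans (Polynomial.natDegree_prod_le _ _) ?_
  refine le_trans (Finset.sum_le_card_nsmul _ _ 1 ?_) ?_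
  · intro j _
    refine le_trans (Polynomial.natDegree_add_le _ _) ?_
    simp only [Polynomial.natDegree_C, max_le_iff]
    refine ⟨by omega, le_trans (Polynomial.natDegree_C_mul_le _ _) (by simp)⟩
  · rw [card_E m i hi, smul_eq_mul, mul_one]

lemma Ppoly_coeff_top : (Ppoly m p).coeff (m+1) = Lq m p * Nq m p ^ (m+1) := by
  unfold Ppoly
  rw [Polynomial.finset_sum_coeff]
  have key : ∀ i ∈ Finset.range (m+3),
      (Polynomial.C (Cq m p i) *
        ∏ j ∈ E m i, (Polynomial.C (Xq m p j) + Polynomial.C (Nq m p) * Polynomial.X)).coeff (m+1)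
      = Cq m p i * Nq m p ^ (m+1) := by
    intro i hi
    rw [Polynomial.coeff_C_mul]
    have hdeg : ∀ q ∈ E m i,
        (Polynomial.C (Xq m p q) + Polynomial.C (Nq m p) * Polynomial.X).natDegree ≤ 1 := by
      intro q _
      refine le_trans (Polynomial.natDegree_add_le _ _) ?_
      simp only [Polynomial.natDegree_C, max_le_iff]
      exact ⟨by omega, le_trans (Polynomial.natDegree_C_mul_le _ _) (by simp)⟩
    have hcp := Polynomial.coeff_prod_of_natDegree_le (s := E m i)
      (f := fun j => Polynomial.C (Xq m p j) + Polynomial.C (Nq m p) * Polynomial.X)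
      (n := 1) hdeg
    rw [card_E m i hi, mul_one] at hcp
    rw [hcp]
    have hcoe : ∀ j ∈ E m i,
        (Polynomial.C (Xq m p j) + Polynomial.C (Nq m p) * Polynomial.X).coeff 1 = Nq m p := by
      intro j _
      simp [Polynomial.coeff_C]
    rw [Finset.prod_congr rfl hcoe, Finset.prod_const, card_E m i hi]
  rw [Finset.sum_congr rfl key, ← Finset.sum_mul, Lq]

lemma Ppoly_coeff_one : (Ppoly m p).coeff 1 = Q2q m p := by
  have h1 : (Ppoly m p).coeff 1 = ((Ppoly m p).derivative).coeff 0 := by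
    rw [Polynomial.coeff_derivative]; push_cast; ring
  rw [h1, Polynomial.coeff_zero_eq_eval_zero]
  unfold Ppoly
  rw [Polynomial.derivative_sum, Polynomial.eval_finset_sum]
  unfold Q2q
  apply Finset.sum_congr rfl
  intro i _
  rw [Polynomial.derivative_C_mul, Polynomial.eval_C_mul]
  congr 1
  rw [derivative_finset_prod, Polynomial.eval_finset_sum]
  apply Finset.sum_congr rfl
  intro j _
  rw [Polynomial.eval_mul, Polynomial.eval_prod]
  congr 1
  · apply Finset.prod_congr rfl
    intro l _
    simp
  · simp

end PolyPart

section Root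
open Polynomial Filter

lemma exists_root_of_odd (H : Polynomial ℝ) (h : Odd H.natDegree) : ∃ s : ℝ, H.eval s = 0 := by
  have hne : H ≠ 0 := by rintro rfl; simp at h
  have hdeg : 0 < H.degree := by
    rw [Polynomial.degree_eq_natDegree hne]
    exact_mod_cast Nat.pos_of_ne_zero (by rintro h0; rw [h0] at h; simp at h)
  have hnd : (H.comp (-X)).natDegree = H.natDegree := by
    rw [Polynomial.natDegree_comp]; simp [Polynomial.natDegree_neg]
  have hcompne : H.comp (-X) ≠ 0 := by
    intro hc
    rw [hc, Polynomial.natDegree_zero] at hnd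
    rw [← hnd] at h; simp at h
  have hdegc : 0 < (H.comp (-X)).degree := by
    rw [Polynomial.degree_eq_natDegree hcompne]
    rw [hnd]
    exact_mod_cast Nat.pos_of_ne_zero (by rintro h0; rw [h0] at h; simp at h)
  have hlcc : (H.comp (-X)).leadingCoeff = -H.leadingCoeff := by
    rw [Polynomial.leadingCoeff_comp (by simp [Polynomial.natDegree_neg])]
    simp only [Polynomial.leadingCoeff_neg, Polynomial.leadingCoeff_X]
    rcases h with ⟨r, hr⟩
    rw [hr, show (-1 : ℝ) ^ (2*r+1) = -1 by rw [pow_succ, pow_mul]; norm_num]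
    ring
  rcases lt_or_gt_of_ne (Polynomial.leadingCoeff_ne_zero.mpr hne) with hlc | hlc
  · have h1 : Tendsto (fun x => H.eval x) atTop atBot :=
      Polynomial.tendsto_atBot_of_leadingCoeff_nonpos H hdeg hlc.le
    have h2 : Tendsto (fun x => H.eval (-x)) atTop atTop := by
      have : Tendsto (fun x => (H.comp (-X)).eval x) atTop atTop := by
        apply Polynomial.tendsto_atTop_of_leadingCoeff_nonneg _ hdegc
        rw [hlcc]; linarith
      simpa [Polynomial.eval_comp] using this
    obtain ⟨x1, hx1⟩ := (h2.eventually_ge_atTop 1).exists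
    obtain ⟨x2, hx2⟩ := (h1.eventually_le_atBot (-1)).exists
    have := intermediate_value_uIcc (a := -x1) (b := x2) (f := fun x => H.eval x)
      H.continuous.continuousOn
    beta_reduce at this
    have h0 : (0:ℝ) ∈ Set.uIcc (H.eval (-x1)) (H.eval x2) :=
      Set.mem_uIcc.mpr (Or.inr ⟨by linarith, by linarith⟩)
    obtain ⟨s, _, hs⟩ := this h0
    exact ⟨s, hs⟩
  · have h1 : Tendsto (fun x => H.eval x) atTop atTop :=
      Polynomial.tendsto_atTop_of_leadingCoeff_nonneg H hdeg hlc.le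
    have h2 : Tendsto (fun x => H.eval (-x)) atTop atBot := by
      have : Tendsto (fun x => (H.comp (-X)).eval x) atTop atBot := by
        apply Polynomial.tendsto_atBot_of_leadingCoeff_nonpos _ hdegc
        rw [hlcc]; linarith
      simpa [Polynomial.eval_comp] using this
    obtain ⟨x1, hx1⟩ := (h1.eventually_ge_atTop 1).exists
    obtain ⟨x2, hx2⟩ := (h2.eventually_le_atBot (-1)).exists
    have := intermediate_value_uIcc (a := -x2) (b := x1) (f := fun x => H.eval x)
      H.continuous.continuousOn
    beta_reduce at this
    have h0 : (0:ℝ) ∈ Set.uIcc (H.eval (-x2)) (H.eval x1) :=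
      Set.mem_uIcc.mpr (Or.inl ⟨by linarith, by linarith⟩)
    obtain ⟨s, _, hs⟩ := this h0
    exact ⟨s, hs⟩

/-- existence of a good nonzero root of the configuration polynomial -/
lemma exists_good_root (m : ℕ) (p : Fin (m+5) → Fin 2 → ℝ) (hOdd : Odd m)
    (hN : Nq m p ≠ 0) (hL : Lq m p ≠ 0) (hQ2 : Q2q m p ≠ 0)
    (hR : ∀ i ∈ Finset.range (m+3), Rq m p i ≠ 0) :
    ∃ s0 : ℝ, s0 ≠ 0 ∧ (Ppoly m p).eval s0 = 0 ∧
      ∀ i ∈ Finset.range (m+3), Xq m p i + Nq m p * s0 ≠ 0 := by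
  have hcoefftop : (Ppoly m p).coeff (m+1) ≠ 0 := by
    rw [Ppoly_coeff_top]
    exact mul_ne_zero hL (pow_ne_zero _ hN)
  have hPne : Ppoly m p ≠ 0 := fun hc => hcoefftop (by rw [hc]; simp)
  have hdeg : (Ppoly m p).natDegree = m + 1 :=
    le_antisymm (Ppoly_natDegree_le m p) (Polynomial.le_natDegree_of_ne_zero hcoefftop)
  have hHdeg : (Ppoly m p).divX.natDegree = m := by
    rw [Polynomial.natDegree_divX_eq_natDegree_tsub_one, hdeg]; omega
  obtain ⟨s0, hroot⟩ := exists_root_of_odd _ (hHdeg ▸ hOdd)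
  have hcoeff0 : (Ppoly m p).coeff 0 = 0 := by
    rw [Polynomial.coeff_zero_eq_eval_zero, Ppoly_eval_eq]
    ring
  have hPs0 : (Ppoly m p).eval s0 = 0 := by
    conv_lhs => rw [← Polynomial.divX_mul_X_add (Ppoly m p)]
    simp [hcoeff0, hroot]
  refine ⟨s0, ?_, hPs0, ?_⟩
  · intro h0
    rw [h0] at hroot
    rw [← Polynomial.coeff_zero_eq_eval_zero, Polynomial.coeff_divX,
      Ppoly_coeff_one] at hroot
    exact hQ2 hroot
  · intro i hi hzero
    apply hR i hi
    have hsN : Nq m p * s0 = - Xq m p i := by linarith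
    rw [← hPs0, Ppoly_eval]
    unfold Rq
    apply Finset.sum_congr rfl
    intro l _
    congr 1
    apply Finset.prod_congr rfl
    intro j _
    rw [hsN]
    ring

end Root

section Chain

variable (m : ℕ) (p : Fin (m+5) → Fin 2 → ℝ) (s0 : ℝ)

noncomputable def xch (i : ℕ) : ℝ := Xq m p i + Nq m p * s0
noncomputable def rch (i : ℕ) : ℝ := s0 * (Yq m p (sk m i) - Yq m p i)
noncomputable def Tch (i : ℕ) : ℝ :=
  -∑ j ∈ Finset.range i, rch m p s0 j / (xch m p s0 j * xch m p s0 (j+1))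
noncomputable def tch (i : ℕ) : ℝ := Tch m p s0 i * xch m p s0 i

lemma chain_consistency (hs0 : s0 ≠ 0) (hN : Nq m p ≠ 0)
    (hPs0 : (Ppoly m p).eval s0 = 0)
    (hx : ∀ i ∈ Finset.range (m+3), xch m p s0 i ≠ 0) :
    ∑ i ∈ Finset.range (m+3),
      rch m p s0 i / (xch m p s0 i * xch m p s0 (sk m i)) = 0 := by
  have hGt : ∑ i ∈ Finset.range (m+3),
      (Yq m p (sk m i) - Yq m p i) * ∏ j ∈ E m i, xch m p s0 j = 0 := by
    have := Ppoly_eval_eq m p s0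
    rw [hPs0] at this
    have h2 := this.symm
    rcases mul_eq_zero.mp h2 with h3 | h3
    · rcases mul_eq_zero.mp h3 with h4 | h4
      · exact absurd h4 hs0
      · exact absurd h4 hN
    · exact h3
  have hprodne : ∏ j ∈ Finset.range (m+3), xch m p s0 j ≠ 0 :=
    Finset.prod_ne_zero_iff.mpr hx
  have hterm : ∀ i ∈ Finset.range (m+3),
      rch m p s0 i / (xch m p s0 i * xch m p s0 (sk m i))
        = s0 * ((Yq m p (sk m i) - Yq m p i) * ∏ j ∈ E m i, xch m p s0 j)
            / ∏ j ∈ Finset.range (m+3), xch m p s0 j := by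
    intro i hi
    have hskmem : sk m i ∈ Finset.range (m+3) :=
      Finset.mem_range.mpr (sk_lt m i (Finset.mem_range.mp hi))
    rw [div_eq_div_iff (mul_ne_zero (hx i hi) (hx _ hskmem)) hprodne,
      ← prod_E_mul m i hi (xch m p s0)]
    unfold rch; ring
  rw [Finset.sum_congr rfl hterm, ← Finset.sum_div, ← Finset.mul_sum, hGt]
  simp

lemma chain_eq (hs0 : s0 ≠ 0) (hN : Nq m p ≠ 0)
    (hPs0 : (Ppoly m p).eval s0 = 0)
    (hx : ∀ i ∈ Finset.range (m+3), xch m p s0 i ≠ 0) :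
    ∀ i ∈ Finset.range (m+3),
      tch m p s0 i * xch m p s0 (sk m i) - tch m p s0 (sk m i) * xch m p s0 i
        = rch m p s0 i := by
  intro i hi
  have hilt := Finset.mem_range.mp hi
  by_cases hwrap : i + 1 = m + 3
  · -- wrap case : i = m+2, sk i = 0
    have hsk : sk m i = 0 := by unfold sk; simp [hwrap]
    have hi' : i = m + 2 := by omega
    have ht0 : tch m p s0 0 = 0 := by
      unfold tch Tch; simp
    rw [hsk, ht0]
    have hcons := chain_consistency m p s0 hs0 hN hPs0 hx
    rw [Finset.sum_range_succ] at hcons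
    have hstep : ∀ j ∈ Finset.range (m+2),
        rch m p s0 j / (xch m p s0 j * xch m p s0 (sk m j))
          = rch m p s0 j / (xch m p s0 j * xch m p s0 (j+1)) := by
      intro j hj
      have hjlt := Finset.mem_range.mp hj
      have hskj : sk m j = j + 1 := by
        unfold sk; rw [if_neg (by omega)]
      rw [hskj]
    rw [Finset.sum_congr rfl hstep] at hcons
    have hT : Tch m p s0 (m+2)
        = rch m p s0 (m+2) / (xch m p s0 (m+2) * xch m p s0 (sk m (m+2))) := by
      unfold Tch
      have : sk m (m+2) = 0 := by unfold sk; simp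
      rw [this] at hcons ⊢
      linarith
    have hsk2 : sk m (m+2) = 0 := by unfold sk; simp
    rw [hi'] at *
    unfold tch
    rw [hT, hsk2]
    have h0mem : (0:ℕ) ∈ Finset.range (m+3) := by simp
    have hm2mem : (m+2) ∈ Finset.range (m+3) := by simp
    have hne0 := hx _ h0mem
    have hne2 := hx _ hm2mem
    field_simp
    ring
  · -- normal case : sk i = i+1
    have hsk : sk m i = i + 1 := by unfold sk; rw [if_neg hwrap]
    rw [hsk]
    unfold tch
    have hTsucc : Tch m p s0 (i+1)
        = Tch m p s0 i - rch m p s0 i / (xch m p s0 i * xch m p s0 (i+1)) := by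
      unfold Tch
      rw [Finset.sum_range_succ]
      ring
    rw [hTsucc]
    have hi1mem : (i+1) ∈ Finset.range (m+3) := Finset.mem_range.mpr (by omega)
    have hnei := hx _ hi
    have hnei1 := hx _ hi1mem
    field_simp
    ring

end Chain

section Witness

variable (m : ℕ) (f g : ℕ → ℝ)

/-- witness configurations: apexes at `(0,0)` and `(0,1)`, equator vertex `i+1`
at `(-f i, g i)`. -/
noncomputable def wit : Fin (m+5) → Fin 2 → ℝ := fun t j =>
  if (t : ℕ) = 0 then 0
  else if (t : ℕ) = m+4 then (if j = 0 then 0 else 1)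
  else (if j = 0 then -f ((t:ℕ) - 1) else g ((t:ℕ) - 1))

lemma val_cast_fin (t : ℕ) (h : t < m+5) : (((t : ℕ) : Fin (m+5)) : ℕ) = t :=
  Fin.val_cast_of_lt h

lemma wit_zero (j : Fin 2) : wit m f g 0 j = 0 := by
  unfold wit
  rw [if_pos]
  rfl

lemma wit_last (j : Fin 2) : wit m f g ((m+4 : ℕ) : Fin (m+5)) j
    = (if j = 0 then 0 else 1) := by
  unfold wit
  rw [val_cast_fin m (m+4) (by omega), if_neg (by omega), if_pos rfl]

lemma wit_mid (t : ℕ) (h1 : 1 ≤ t) (h2 : t ≤ m+3) (j : Fin 2) :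
    wit m f g ((t : ℕ) : Fin (m+5)) j = (if j = 0 then -f (t - 1) else g (t - 1)) := by
  unfold wit
  rw [val_cast_fin m t (by omega), if_neg (by omega), if_neg (by omega)]

lemma wit_vv (j : Fin 2) : vv m (wit m f g) j = (if j = 0 then 0 else 1) := by
  unfold vv
  rw [wit_last, wit_zero]
  ring

lemma wit_Nq : Nq m (wit m f g) = 1 := by
  unfold Nq
  rw [wit_vv, wit_vv]
  norm_num

lemma wit_Xq (i : ℕ) (hi : i < m+3) : Xq m (wit m f g) i = f i := by
  unfold Xq
  rw [wit_vv, wit_vv, wit_zero, wit_zero, wit_mid m f g (i+1) (by omega) (by omega),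
    wit_mid m f g (i+1) (by omega) (by omega)]
  norm_num

lemma wit_Yq (i : ℕ) (hi : i < m+3) : Yq m (wit m f g) i = g i := by
  unfold Yq
  rw [wit_vv, wit_vv, wit_zero, wit_zero, wit_mid m f g (i+1) (by omega) (by omega),
    wit_mid m f g (i+1) (by omega) (by omega)]
  norm_num

lemma wit_Cq (i : ℕ) (hi : i < m+3) :
    Cq m (wit m f g) i = g i * f (sk m i) - g (sk m i) * f i := by
  unfold Cq
  rw [wit_Xq m f g i hi, wit_Yq m f g i hi, wit_Xq m f g (sk m i) (sk_lt m i hi),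
    wit_Yq m f g (sk m i) (sk_lt m i hi)]

end Witness

section WitnessValues

/-- the leading-coefficient factor is nonzero at a witness -/
lemma wit_Lq_ne (m : ℕ) :
    Lq m (wit m (fun i => (i:ℝ)) (fun i => if i = 0 then 1 else 0)) ≠ 0 := by
  set f : ℕ → ℝ := fun i => (i:ℝ) with hf
  set g : ℕ → ℝ := fun i => if i = 0 then 1 else 0 with hg
  unfold Lq
  have hC : ∀ i ∈ Finset.range (m+3),
      Cq m (wit m f g) i = g i * f (sk m i) - g (sk m i) * f i := by
    intro i hi
    exact wit_Cq m f g i (Finset.mem_range.mp hi)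
  rw [Finset.sum_congr rfl hC, Finset.sum_sub_distrib]
  have h1 : ∑ i ∈ Finset.range (m+3), g i * f (sk m i) = f 1 := by
    rw [Finset.sum_eq_single_of_mem 0 (by simp)]
    · have : sk m 0 = 1 := by unfold sk; rw [if_neg (by omega)]
      rw [this]; simp [hg]
    · intro b _ hb
      simp [hg, hb]
  have h2 : ∑ i ∈ Finset.range (m+3), g (sk m i) * f i = f (m+2) := by
    rw [Finset.sum_eq_single_of_mem (m+2) (by simp)]
    · have : sk m (m+2) = 0 := by unfold sk; rw [if_pos (by omega)]
      rw [this]; simp [hg]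
    · intro b hb hbne
      have hblt := Finset.mem_range.mp hb
      have : sk m b = b + 1 := by unfold sk; rw [if_neg (by omega)]
      rw [this]
      simp only [hg, if_neg (show b+1 ≠ 0 by omega)]
      ring
  rw [h1, h2]
  simp only [hf]
  push_cast
  intro hcon
  have : (1:ℝ) - (m+2) = 0 := by linarith
  have hm : (0:ℝ) ≤ m := Nat.cast_nonneg m
  linarith

/-- the simple-root factor is nonzero at a witness -/
lemma wit_Q2q_ne (m : ℕ) :
    Q2q m (wit m (fun i => if i = 1 then 0 else 1) (fun i => if i = 0 then 1 else 0)) ≠ 0 := by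
  set f : ℕ → ℝ := fun i => if i = 1 then 0 else 1 with hf
  set g : ℕ → ℝ := fun i => if i = 0 then 1 else 0 with hg
  unfold Q2q
  have hsum : ∑ i ∈ Finset.range (m+3), Cq m (wit m f g) i *
      ∑ j ∈ E m i, (∏ l ∈ (E m i).erase j, Xq m (wit m f g) l) * Nq m (wit m f g)
      = -1 := by
    rw [Finset.sum_eq_single_of_mem (m+2) (by simp)]
    · have hsk : sk m (m+2) = 0 := by unfold sk; rw [if_pos (by omega)]
      have hC : Cq m (wit m f g) (m+2) = -1 := by
        rw [wit_Cq m f g (m+2) (by omega), hsk]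
        simp only [hf, hg]
        simp [show (m+2:ℕ) ≠ 1 from by omega, show (m+2:ℕ) ≠ 0 from by omega]
      rw [hC]
      have h1mem : (1:ℕ) ∈ E m (m+2) := by
        unfold E
        rw [hsk, Finset.mem_erase, Finset.mem_erase, Finset.mem_range]
        omega
      have hinner : ∑ j ∈ E m (m+2),
          (∏ l ∈ (E m (m+2)).erase j, Xq m (wit m f g) l) * Nq m (wit m f g) = 1 := by
        rw [Finset.sum_eq_single_of_mem 1 h1mem]
        · rw [wit_Nq, mul_one]
          apply Finset.prod_eq_one
          intro l hl
          have hl1 : l ≠ 1 := Finset.ne_of_mem_erase hl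
          have hlE : l ∈ E m (m+2) := Finset.mem_of_mem_erase hl
          have hllt : l < m+3 := by
            have := Finset.mem_of_mem_erase (Finset.mem_of_mem_erase hlE)
            exact Finset.mem_range.mp this
          rw [wit_Xq m f g l hllt]
          simp only [hf]
          rw [if_neg hl1]
        · intro b hb hbne
          have hbE : b ∈ E m (m+2) := hb
          have hblt : b < m+3 := by
            have := Finset.mem_of_mem_erase (Finset.mem_of_mem_erase hbE)
            exact Finset.mem_range.mp this
          have h1memb : (1:ℕ) ∈ (E m (m+2)).erase b := by
            rw [Finset.mem_erase]
            exact ⟨fun hh => hbne hh.symm, h1mem⟩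
          rw [Finset.prod_eq_zero h1memb]
          · ring
          · rw [wit_Xq m f g 1 (by omega)]
            simp [hf]
      rw [hinner]
      ring
    · intro b hb hbne
      have hblt := Finset.mem_range.mp hb
      have hC : Cq m (wit m f g) b = 0 := by
        rw [wit_Cq m f g b hblt]
        have hskb : sk m b = b + 1 := by unfold sk; rw [if_neg (by omega)]
        rw [hskb]
        by_cases hb0 : b = 0
        · subst hb0
          simp only [hf, hg]
          norm_num
        · simp only [hg, if_neg hb0, if_neg (show b+1 ≠ 0 by omega)]
          ring
      rw [hC]; ring
  rw [hsum]
  norm_num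

/-- the `x_i ≠ 0` factors are nonzero at witnesses -/
lemma wit_Rq_ne (m : ℕ) (i : ℕ) (hik : i < m+3) :
    Rq m (wit m
      (fun l => if l = (if i = 0 then m+2 else i-1) then 0
                else if l = i then -1 else (l:ℝ)+1)
      (fun l => if l = i then 1 else 0)) i ≠ 0 := by
  set ip : ℕ := if i = 0 then m+2 else i-1 with hip
  set f : ℕ → ℝ := fun l => if l = ip then 0 else if l = i then -1 else (l:ℝ)+1 with hf
  set g : ℕ → ℝ := fun l => if l = i then 1 else 0 with hg
  have hipne : ip ≠ i := by rw [hip]; split <;> omega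
  have hsk_ip : sk m ip = i := by
    rw [hip]; unfold sk; split <;> split <;> omega
  have hski : sk m i ≠ i := sk_ne m i
  have hskip2 : sk m i ≠ ip := by
    rw [hip]; unfold sk; split <;> split <;> omega
  have hfi : f i = -1 := by
    simp only [hf]
    rw [if_neg (fun hh => hipne hh.symm)]
    simp
  unfold Rq
  rw [Finset.sum_eq_single_of_mem i (Finset.mem_range.mpr hik)]
  · have hC : Cq m (wit m f g) i = (sk m i : ℝ) + 1 := by
      rw [wit_Cq m f g i hik]
      simp only [hg, hf]
      simp [hski, hskip2, Ne.symm hipne]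
    rw [hC]
    apply mul_ne_zero
    · have : (0:ℝ) ≤ (sk m i : ℝ) := Nat.cast_nonneg _
      intro hcon; linarith
    · apply ne_of_gt
      apply Finset.prod_pos
      intro j hj
      have hjne_i : j ≠ i := by
        unfold E at hj
        exact Finset.ne_of_mem_erase (Finset.mem_of_mem_erase hj)
      have hjlt : j < m+3 := by
        unfold E at hj
        exact Finset.mem_range.mp (Finset.mem_of_mem_erase (Finset.mem_of_mem_erase hj))
      rw [wit_Xq m f g j hjlt, wit_Xq m f g i hik, hfi]
      by_cases hjip : j = ip
      · subst hjip
        simp only [hf, if_pos rfl]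
        norm_num
      · simp only [hf]
        rw [if_neg hjip, if_neg hjne_i]
        have : (0:ℝ) ≤ (j:ℝ) := Nat.cast_nonneg _
        linarith
  · intro b hb hbne
    have hblt := Finset.mem_range.mp hb
    have hC : Cq m (wit m f g) b = 0 := by
      rw [wit_Cq m f g b hblt]
      by_cases hbip : b = ip
      · subst hbip
        simp only [hg]
        rw [hsk_ip, if_pos rfl, if_neg hbne]
        simp only [hf, if_pos rfl]
        ring
      · have hskb : sk m b ≠ i := by
          intro hcon
          apply hbip
          rw [hip]
          unfold sk at hcon
          revert hcon
          split <;> split <;> omega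
        simp only [hg]
        rw [if_neg hbne, if_neg hskb]
        ring
    rw [hC]; ring

end WitnessValues

section Aeval

/-- the coordinate variables as a formal configuration -/
noncomputable def piX (m : ℕ) : Fin (m+5) → Fin 2 → MvPolynomial (Fin (m+5) × Fin 2) ℚ :=
  fun v j => MvPolynomial.X (v, j)

variable (m : ℕ) (w : Fin (m+5) → Fin 2 → ℝ)

lemma aeval_Nq :
    MvPolynomial.aeval (fun v : Fin (m+5) × Fin 2 => w v.1 v.2) (Nq m (piX m)) = Nq m w := by
  have h := map_Nq
    ((MvPolynomial.aeval (fun v : Fin (m+5) × Fin 2 => w v.1 v.2)).toRingHom) m (piX m)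
  simpa [piX] using h

lemma aeval_Lq :
    MvPolynomial.aeval (fun v : Fin (m+5) × Fin 2 => w v.1 v.2) (Lq m (piX m)) = Lq m w := by
  have h := map_Lq
    ((MvPolynomial.aeval (fun v : Fin (m+5) × Fin 2 => w v.1 v.2)).toRingHom) m (piX m)
  simpa [piX] using h

lemma aeval_Q2q :
    MvPolynomial.aeval (fun v : Fin (m+5) × Fin 2 => w v.1 v.2) (Q2q m (piX m)) = Q2q m w := by
  have h := map_Q2q
    ((MvPolynomial.aeval (fun v : Fin (m+5) × Fin 2 => w v.1 v.2)).toRingHom) m (piX m)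
  simpa [piX] using h

lemma aeval_Rq (i : ℕ) :
    MvPolynomial.aeval (fun v : Fin (m+5) × Fin 2 => w v.1 v.2) (Rq m (piX m) i)
      = Rq m w i := by
  have h := map_Rq
    ((MvPolynomial.aeval (fun v : Fin (m+5) × Fin 2 => w v.1 v.2)).toRingHom) m (piX m) i
  simpa [piX] using h

end Aeval

section GenericFacts

/-- extraction of all genericity conditions -/
lemma generic_conditions (m : ℕ) (p : Fin (m+5) → Fin 2 → ℝ)
    (hp : ∀ f : MvPolynomial (Fin (m+5) × Fin 2) ℚ, f ≠ 0 →
      MvPolynomial.aeval (fun v => p v.1 v.2) f ≠ 0) :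
    Nq m p ≠ 0 ∧ Lq m p ≠ 0 ∧ Q2q m p ≠ 0 ∧
      ∀ i ∈ Finset.range (m+3), Rq m p i ≠ 0 := by
  have hNmv : Nq m (piX m) ≠ 0 := by
    intro hc
    have h1 := aeval_Nq m (wit m (fun _ => 0) (fun _ => 0))
    rw [hc, map_zero] at h1
    rw [wit_Nq] at h1
    exact one_ne_zero h1.symm
  have hLmv : Lq m (piX m) ≠ 0 := by
    intro hc
    have h1 := aeval_Lq m (wit m (fun i => (i:ℝ)) (fun i => if i = 0 then 1 else 0))
    rw [hc, map_zero] at h1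
    exact wit_Lq_ne m h1.symm
  have hQmv : Q2q m (piX m) ≠ 0 := by
    intro hc
    have h1 := aeval_Q2q m
      (wit m (fun i => if i = 1 then 0 else 1) (fun i => if i = 0 then 1 else 0))
    rw [hc, map_zero] at h1
    exact wit_Q2q_ne m h1.symm
  have hRmv : ∀ i ∈ Finset.range (m+3), Rq m (piX m) i ≠ 0 := by
    intro i hi hc
    have h1 := aeval_Rq m (wit m
      (fun l => if l = (if i = 0 then m+2 else i-1) then 0
                else if l = i then -1 else (l:ℝ)+1)
      (fun l => if l = i then 1 else 0)) i
    rw [hc, map_zero] at h1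
    exact wit_Rq_ne m i (Finset.mem_range.mp hi) h1.symm
  have hFne : Nq m (piX m) * (Lq m (piX m) * (Q2q m (piX m) *
      ∏ i ∈ Finset.range (m+3), Rq m (piX m) i)) ≠ 0 :=
    mul_ne_zero hNmv (mul_ne_zero hLmv (mul_ne_zero hQmv
      (Finset.prod_ne_zero_iff.mpr hRmv)))
  have hval := hp _ hFne
  rw [map_mul, map_mul, map_mul, map_prod] at hval
  rw [aeval_Nq, aeval_Lq, aeval_Q2q] at hval
  have hvR : ∀ i ∈ Finset.range (m+3),
      MvPolynomial.aeval (fun v => p v.1 v.2) (Rq m (piX m) i) = Rq m p i := by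
    intro i _; exact aeval_Rq m p i
  rw [Finset.prod_congr rfl hvR] at hval
  refine ⟨?_, ?_, ?_, ?_⟩
  · exact fun hc => hval (by rw [hc]; ring)
  · exact fun hc => hval (by rw [hc]; ring)
  · exact fun hc => hval (by rw [hc]; ring)
  · intro i hi hc
    apply hval
    rw [Finset.prod_eq_zero hi hc]
    ring

end GenericFacts

section QDef

variable (m : ℕ) (p : Fin (m+5) → Fin 2 → ℝ) (s0 : ℝ)

lemma sk_of_lt (i : ℕ) (h : i + 1 < m+3) : sk m i = i + 1 := by
  unfold sk; rw [if_neg (by omega)]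

lemma sk_last : sk m (m+2) = 0 := by
  unfold sk; rw [if_pos (by omega)]

/-- the flexed configuration -/
noncomputable def qdef : Fin (m+5) → Fin 2 → ℝ :=
  fun t j => if (t:ℕ) = 0 ∨ (t:ℕ) = m+4 then p t j
    else p t j + s0 * (if j = (0 : Fin 2) then -(vv m p 1) else vv m p 0)
         + tch m p s0 ((t:ℕ)-1) * vv m p j

lemma qdef_zero (j : Fin 2) : qdef m p s0 0 j = p 0 j := by
  unfold qdef
  rw [if_pos (Or.inl (Fin.val_zero _))]

lemma qdef_last (j : Fin 2) :
    qdef m p s0 ((m+4 : ℕ) : Fin (m+5)) j = p ((m+4 : ℕ) : Fin (m+5)) j := by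
  unfold qdef
  rw [if_pos (Or.inr (val_cast_fin m (m+4) (by omega)))]

lemma qdef_mid0 (t : ℕ) (h1 : 1 ≤ t) (h2 : t ≤ m+3) :
    qdef m p s0 ((t : ℕ) : Fin (m+5)) 0
      = p ((t : ℕ) : Fin (m+5)) 0 + s0 * (-(vv m p 1))
          + tch m p s0 (t-1) * vv m p 0 := by
  unfold qdef
  rw [val_cast_fin m t (by omega), if_neg (by omega), if_pos rfl]

lemma qdef_mid1 (t : ℕ) (h1 : 1 ≤ t) (h2 : t ≤ m+3) :
    qdef m p s0 ((t : ℕ) : Fin (m+5)) 1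
      = p ((t : ℕ) : Fin (m+5)) 1 + s0 * (vv m p 0)
          + tch m p s0 (t-1) * vv m p 1 := by
  unfold qdef
  rw [val_cast_fin m t (by omega), if_neg (by omega), if_neg (by decide)]

lemma vec3_0 {α : Type*} (a b c : α) : (![a,b,c]) 0 = a := rfl
lemma vec3_1 {α : Type*} (a b c : α) : (![a,b,c]) 1 = b := rfl
lemma vec3_2 {α : Type*} (a b c : α) : (![a,b,c]) 2 = c := rfl

end QDef
end BipyrAux

lemma vol2_apply (x : Fin 3 → Fin 2 → ℝ) :
    vol 2 x = (x 1 0 - x 0 0) * (x 2 1 - x 0 1) - (x 2 0 - x 0 0) * (x 1 1 - x 0 1) := by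
  have e1 : ∀ j : Fin 3,
      (Fin.cases (motive := fun _ => ℝ) 1 (fun k => x j k) (1 : Fin 3)) = x j 0 := fun _ => rfl
  have e2 : ∀ j : Fin 3,
      (Fin.cases (motive := fun _ => ℝ) 1 (fun k => x j k) (2 : Fin 3)) = x j 1 := fun _ => rfl
  show (Matrix.of _ : Matrix (Fin 3) (Fin 3) ℝ).det = _
  rw [Matrix.det_fin_three]
  simp only [Matrix.of_apply, Fin.cases_zero, e1, e2]
  ring

/-- For an even number of vertices `n = m + 5 ≥ 5`, every generic framework of
the `(n−2)`-gonal bipyramid in `ℝ²` has at least two congruence classes: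
there is a framework equivalent to it (equal signed areas on all hyperedges)
but not congruent to it (the signed areas of some triple of vertices differ). -/
theorem bipyramid_two_congruence_classes (m : ℕ) (hEven : Even (m + 5))
    (p : Fin (m + 5) → Fin 2 → ℝ) (hp : Generic (m + 5) p) :
    ∃ q : Fin (m + 5) → Fin 2 → ℝ,
      (∀ h ∈ bipyramidEdges m, vol 2 (q ∘ h) = vol 2 (p ∘ h)) ∧
      ¬ ∀ t : Fin 3 → Fin (m + 5), vol 2 (q ∘ t) = vol 2 (p ∘ t) := by
  classical
  obtain ⟨hN, hL, hQ2, hR⟩ := BipyrAux.generic_conditions m p hp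
  have hOdd : Odd m := by
    rcases hEven with ⟨r, hr⟩
    exact ⟨r - 3, by omega⟩
  obtain ⟨s0, hs0, hPs0, hx'⟩ := BipyrAux.exists_good_root m p hOdd hN hL hQ2 hR
  have hx : ∀ i ∈ Finset.range (m+3), BipyrAux.xch m p s0 i ≠ 0 := hx'
  have hchain := BipyrAux.chain_eq m p s0 hs0 hN hPs0 hx
  have hone : ((1:ℕ) : Fin (m+5)) = (1 : Fin (m+5)) := by norm_num
  refine ⟨BipyrAux.qdef m p s0, ?_, ?_⟩
  · intro h hmem
    simp only [bipyramidEdges, Set.mem_union, Set.mem_setOf_eq] at hmem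
    rcases hmem with ⟨i, hi1, hi2, hE | hE⟩ | (hE | hE)
    · -- apex-a edge (0, i, i+1)
      subst hE
      rw [vol2_apply, vol2_apply]
      simp only [Function.comp_apply, BipyrAux.vec3_0, BipyrAux.vec3_1, BipyrAux.vec3_2]
      rw [BipyrAux.qdef_zero, BipyrAux.qdef_zero,
        BipyrAux.qdef_mid0 m p s0 i hi1 (by omega), BipyrAux.qdef_mid1 m p s0 i hi1 (by omega),
        BipyrAux.qdef_mid0 m p s0 (i+1) (by omega) (by omega),
        BipyrAux.qdef_mid1 m p s0 (i+1) (by omega) (by omega)]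
      rw [Nat.add_sub_cancel]
      have hch := hchain (i-1) (Finset.mem_range.mpr (by omega))
      simp only [BipyrAux.xch, BipyrAux.rch, BipyrAux.Xq, BipyrAux.Yq, BipyrAux.Nq,
        BipyrAux.vv] at hch
      rw [BipyrAux.sk_of_lt m (i-1) (by omega)] at hch
      rw [show i - 1 + 1 = i from by omega] at hch
      simp only [BipyrAux.vv]
      linear_combination hch
    · -- apex-b edge (i, i+1, m+4)
      subst hE
      rw [vol2_apply, vol2_apply]
      simp only [Function.comp_apply, BipyrAux.vec3_0, BipyrAux.vec3_1, BipyrAux.vec3_2]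
      rw [BipyrAux.qdef_last, BipyrAux.qdef_last,
        BipyrAux.qdef_mid0 m p s0 i hi1 (by omega), BipyrAux.qdef_mid1 m p s0 i hi1 (by omega),
        BipyrAux.qdef_mid0 m p s0 (i+1) (by omega) (by omega),
        BipyrAux.qdef_mid1 m p s0 (i+1) (by omega) (by omega)]
      rw [Nat.add_sub_cancel]
      have hch := hchain (i-1) (Finset.mem_range.mpr (by omega))
      simp only [BipyrAux.xch, BipyrAux.rch, BipyrAux.Xq, BipyrAux.Yq, BipyrAux.Nq,
        BipyrAux.vv] at hch
      rw [BipyrAux.sk_of_lt m (i-1) (by omega)] at hch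
      rw [show i - 1 + 1 = i from by omega] at hch
      simp only [BipyrAux.vv]
      linear_combination hch
    · -- wrap apex-a edge (0, m+3, 1)
      subst hE
      rw [vol2_apply, vol2_apply]
      simp only [Function.comp_apply, BipyrAux.vec3_0, BipyrAux.vec3_1, BipyrAux.vec3_2]
      rw [← hone]
      rw [BipyrAux.qdef_zero, BipyrAux.qdef_zero,
        BipyrAux.qdef_mid0 m p s0 (m+3) (by omega) (by omega),
        BipyrAux.qdef_mid1 m p s0 (m+3) (by omega) (by omega),
        BipyrAux.qdef_mid0 m p s0 1 (by omega) (by omega),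
        BipyrAux.qdef_mid1 m p s0 1 (by omega) (by omega)]
      rw [show (1:ℕ) - 1 = 0 from rfl, show m + 3 - 1 = m + 2 from by omega]
      have hch := hchain (m+2) (Finset.mem_range.mpr (by omega))
      simp only [BipyrAux.xch, BipyrAux.rch, BipyrAux.Xq, BipyrAux.Yq, BipyrAux.Nq,
        BipyrAux.vv] at hch
      rw [BipyrAux.sk_last m] at hch
      rw [show (0:ℕ) + 1 = 1 from rfl, show m + 2 + 1 = m + 3 from rfl] at hch
      simp only [BipyrAux.vv]
      linear_combination hch
    · -- wrap apex-b edge (m+3, 1, m+4)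
      subst hE
      rw [vol2_apply, vol2_apply]
      simp only [Function.comp_apply, BipyrAux.vec3_0, BipyrAux.vec3_1, BipyrAux.vec3_2]
      rw [← hone]
      rw [BipyrAux.qdef_last, BipyrAux.qdef_last,
        BipyrAux.qdef_mid0 m p s0 (m+3) (by omega) (by omega),
        BipyrAux.qdef_mid1 m p s0 (m+3) (by omega) (by omega),
        BipyrAux.qdef_mid0 m p s0 1 (by omega) (by omega),
        BipyrAux.qdef_mid1 m p s0 1 (by omega) (by omega)]
      rw [show (1:ℕ) - 1 = 0 from rfl, show m + 3 - 1 = m + 2 from by omega]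
      have hch := hchain (m+2) (Finset.mem_range.mpr (by omega))
      simp only [BipyrAux.xch, BipyrAux.rch, BipyrAux.Xq, BipyrAux.Yq, BipyrAux.Nq,
        BipyrAux.vv] at hch
      rw [BipyrAux.sk_last m] at hch
      rw [show (0:ℕ) + 1 = 1 from rfl, show m + 2 + 1 = m + 3 from rfl] at hch
      simp only [BipyrAux.vv]
      linear_combination hch
  · intro hall
    have ht := hall ![(0 : Fin (m+5)), ((m+4:ℕ) : Fin (m+5)), ((1:ℕ) : Fin (m+5))]
    rw [vol2_apply, vol2_apply] at ht
    simp only [Function.comp_apply, BipyrAux.vec3_0, BipyrAux.vec3_1, BipyrAux.vec3_2] at ht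
    rw [BipyrAux.qdef_zero, BipyrAux.qdef_zero, BipyrAux.qdef_last, BipyrAux.qdef_last,
      BipyrAux.qdef_mid0 m p s0 1 (by omega) (by omega),
      BipyrAux.qdef_mid1 m p s0 1 (by omega) (by omega)] at ht
    have hcon : s0 * BipyrAux.Nq m p = 0 := by
      simp only [BipyrAux.Nq, BipyrAux.vv] at ht ⊢
      linear_combination ht
    exact (mul_ne_zero hs0 hN) hcon
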